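/- Let $f: \mathbb{R} \to \mathbb{R}$ be $n$-times continuously differentiable on $[0,\infty)$ (one-sided derivatives at 0), let $0 \le t_0 < \cdots < t_n$, and let $w_i = \ell_i(-1)$ where $\ell_i$ are the Lagrange basis polynomials for the nodes. Define $E_n[f](x) = f(x)$ for $x \ge 0$ and $E_n[f](x) = \sum_{j=0}^n w_j f(-t_j x)$ for $x < 0$. Then $E_n[f]$ is $n$-times continuously differentiable on $\mathbb{R}$ wherever defined; i.e., for each $k = 0, \dots, n$, the $k$-th derivative of $\sum_j w_j f(-t_j x)$ at $x = 0^-$ equals $f^{(k)}(0^+)$. -/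

import Mathlib

open Polynomial

private lemma iter_sum_aux {ι : Type*} (u : Finset ι) {F : ι → ℝ → ℝ} {s : Set ℝ} {x : ℝ}
    (hx : x ∈ s) (hs : UniqueDiffOn ℝ s) {k : ℕ} (h : ∀ i ∈ u, ContDiffOn ℝ k (F i) s) :
    iteratedDerivWithin k (fun y => ∑ i ∈ u, F i y) s x
      = ∑ i ∈ u, iteratedDerivWithin k (F i) s x := by
  classical
  induction u using Finset.induction_on with
  | empty =>
      simp only [Finset.sum_empty]
      simp [iteratedDerivWithin, iteratedFDerivWithin_zero_fun]
  | @insert a u ha ih =>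
      have h1 : ContDiffOn ℝ k (F a) s := h a (Finset.mem_insert_self a u)
      have h2 : ContDiffOn ℝ k (fun y => ∑ i ∈ u, F i y) s := by
        apply ContDiffOn.sum
        intro i hi
        exact h i (Finset.mem_insert_of_mem hi)
      have : (fun y => ∑ i ∈ insert a u, F i y)
          = (F a + fun y => ∑ i ∈ u, F i y) := by
        funext y
        simp [Finset.sum_insert ha]
      rw [this, iteratedDerivWithin_add hx hs (h1 x hx) (h2 x hx), ih (fun i hi => h i (Finset.mem_insert_of_mem hi)),
        Finset.sum_insert ha]

private lemma iter_comp_aux {f : ℝ → ℝ} {n : ℕ} (hf : ContDiffOn ℝ n f (Set.Ici 0))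
    {c : ℝ} (hc : c ≤ 0) : ∀ k : ℕ, k ≤ n → ∀ y ∈ Set.Iic (0 : ℝ),
    iteratedDerivWithin k (fun x => f (c * x)) (Set.Iic 0) y
      = c ^ k * iteratedDerivWithin k f (Set.Ici 0) (c * y) := by
  intro k
  induction k with
  | zero => intro _ y hy; simp
  | succ k ih =>
      intro hk y hy
      have hmaps : Set.MapsTo (fun x => c * x) (Set.Iic 0) (Set.Ici 0) := fun x hx =>
        by simpa [neg_mul_neg] using mul_nonneg (neg_nonneg.2 hc) (neg_nonneg.2 hx)
      have hcy : c * y ∈ Set.Ici (0 : ℝ) := hmaps hy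
      have hud : UniqueDiffOn ℝ (Set.Iic (0 : ℝ)) := uniqueDiffOn_Iic 0
      have hud' : UniqueDiffOn ℝ (Set.Ici (0 : ℝ)) := uniqueDiffOn_Ici 0
      rw [iteratedDerivWithin_succ]
      have hEq : Set.EqOn (iteratedDerivWithin k (fun x => f (c * x)) (Set.Iic 0))
          (fun x => c ^ k * iteratedDerivWithin k f (Set.Ici 0) (c * x)) (Set.Iic 0) :=
        fun x hx => ih (le_of_lt hk) x hx
      rw [derivWithin_congr hEq (hEq hy)]
      have hF : DifferentiableWithinAt ℝ (iteratedDerivWithin k f (Set.Ici 0))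
          (Set.Ici 0) (c * y) := by
        refine (hf.differentiableOn_iteratedDerivWithin ?_ hud') _ hcy
        exact_mod_cast hk
      have h1 : HasDerivWithinAt (fun x => iteratedDerivWithin k f (Set.Ici 0) (c * x))
          (derivWithin (iteratedDerivWithin k f (Set.Ici 0)) (Set.Ici 0) (c * y) * c)
          (Set.Iic 0) y := by
        have := HasDerivWithinAt.comp y hF.hasDerivWithinAt
          ((hasDerivWithinAt_id y (Set.Iic (0:ℝ))).const_mul c) hmaps
        simpa [Function.comp_def] using this
      have h2 := (h1.const_mul (c ^ k)).derivWithin (hud.uniqueDiffWithinAt hy)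
      rw [h2, iteratedDerivWithin_succ]
      ring

private lemma vand_aux {n k : ℕ} (hk : k ≤ n) (t : Fin (n + 1) → ℝ)
    (hinj : Function.Injective t) :
    ∑ j : Fin (n + 1), (t j) ^ k * (Lagrange.basis Finset.univ t j).eval (-1)
      = (-1 : ℝ) ^ k := by
  have hdeg : ((X : ℝ[X]) ^ k).degree < (Finset.univ : Finset (Fin (n + 1))).card := by
    rw [degree_X_pow, Finset.card_univ, Fintype.card_fin]
    exact_mod_cast Nat.lt_succ_of_le hk
  have h := Lagrange.eq_interpolate (v := t) (s := Finset.univ) hinj.injOn hdeg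
  have h2 := congrArg (eval (-1 : ℝ)) h
  simp only [Lagrange.interpolate_apply, eval_finset_sum, eval_mul, eval_C, eval_pow,
    eval_X] at h2
  rw [← h2]

/-- the extension `E_n[f](x) = ∑ⱼ wⱼ f(-tⱼ x)` for `x < 0` matches the
one-sided derivatives of `f` at `0` up to order `n`, where `wⱼ = ℓⱼ(-1)`. -/
theorem stmt_17 (n : ℕ) (f : ℝ → ℝ) (hf : ContDiffOn ℝ n f (Set.Ici 0))
    (t : Fin (n + 1) → ℝ) (ht0 : 0 ≤ t 0) (htmono : StrictMono t)
    (w : Fin (n + 1) → ℝ)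
    (hw : ∀ j, w j = (Lagrange.basis Finset.univ t j).eval (-1)) :
    ∀ k : ℕ, k ≤ n →
      iteratedDerivWithin k (fun x => ∑ j : Fin (n + 1), w j * f (-(t j) * x))
          (Set.Iic 0) 0 =
        iteratedDerivWithin k f (Set.Ici 0) 0 := by
  intro k hk
  have hud : UniqueDiffOn ℝ (Set.Iic (0 : ℝ)) := uniqueDiffOn_Iic 0
  have h0 : (0 : ℝ) ∈ Set.Iic (0 : ℝ) := Set.mem_Iic.mpr le_rfl
  have htj : ∀ j, 0 ≤ t j := fun j => le_trans ht0 (htmono.monotone (Fin.zero_le j))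
  have hcomp : ∀ j : Fin (n + 1), ContDiffOn ℝ n (fun x => f (-(t j) * x)) (Set.Iic 0) := by
    intro j
    have hmaps : Set.MapsTo (fun x => -(t j) * x) (Set.Iic 0) (Set.Ici 0) := fun x hx =>
      by simpa [neg_mul_neg] using mul_nonneg (htj j) (neg_nonneg.2 hx)
    exact hf.comp ((contDiff_const.mul contDiff_id).contDiffOn) hmaps
  have hterm : ∀ j : Fin (n + 1), ContDiffOn ℝ k (fun x => w j * f (-(t j) * x)) (Set.Iic 0) := by
    intro j
    exact (contDiffOn_const.mul ((hcomp j).of_le (by exact_mod_cast hk)))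
  rw [iter_sum_aux Finset.univ h0 hud (fun j _ => hterm j)]
  have hterm2 : ∀ j : Fin (n + 1),
      iteratedDerivWithin k (fun x => w j * f (-(t j) * x)) (Set.Iic 0) 0
        = w j * ((-(t j)) ^ k * iteratedDerivWithin k f (Set.Ici 0) 0) := by
    intro j
    rw [iteratedDerivWithin_const_mul h0 hud (w j) (((hcomp j).of_le (by exact_mod_cast hk)) 0 h0),
      iter_comp_aux hf (neg_nonpos.mpr (htj j)) k hk 0 h0]
    simp
  simp_rw [hterm2]
  have key : ∑ j : Fin (n + 1), w j * ((-(t j)) ^ k * iteratedDerivWithin k f (Set.Ici 0) 0)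
      = (∑ j : Fin (n + 1), (t j) ^ k * w j)
        * ((-1 : ℝ) ^ k * iteratedDerivWithin k f (Set.Ici 0) 0) := by
    rw [Finset.sum_mul]
    apply Finset.sum_congr rfl
    intro j _
    rw [neg_pow (t j) k]
    ring
  rw [key]
  have hv : ∑ j : Fin (n + 1), (t j) ^ k * w j = (-1 : ℝ) ^ k := by
    simp_rw [hw]
    exact vand_aux hk t htmono.injective
  rw [hv, ← mul_assoc, ← mul_pow]
  norm_num
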